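/- Let s ∈ ℝ, p ∈ (0,∞), q ∈ (0,∞), and τ ∈ (1/p, ∞). Define ‖t‖_{ḃ^{s,τ}_{p,q}} via the Besov-type sequence norm and ‖t‖_{ḟ^{s,τ}_{p,q}} via the Triebel-Lizorkin-type sequence norm. Then both norms are equivalent to each other (both being equivalent to ‖t‖_{ḃ^{s+n(τ-1/p)}_{∞,∞}} = sup_Q |Q|^{-s/n-(τ-1/p)-1/2}|t_Q|); in particular ḟ^{s,τ}_{p,q}(ℝⁿ) = ḃ^{s,τ}_{p,q}(ℝⁿ) with equivalent norms when τ > 1/p. -/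

import Mathlib

open MeasureTheory ENNReal

/-- A dyadic cube `Q_{jk} = 2^{-j}([0,1)^n + k)` in `ℝⁿ`, recorded by its
generation `j ∈ ℤ` and position `k ∈ ℤⁿ`. -/
structure DyadicCube (n : ℕ) where
  j : ℤ
  k : Fin n → ℤ

namespace DyadicCube

/-- The dyadic cube as a subset of `ℝⁿ`. -/
def toSet {n : ℕ} (Q : DyadicCube n) : Set (Fin n → ℝ) :=
  {x | ∀ i, (Q.k i : ℝ) * (2 : ℝ) ^ (-Q.j) ≤ x i ∧
        x i < ((Q.k i : ℝ) + 1) * (2 : ℝ) ^ (-Q.j)}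

/-- The Lebesgue measure `|Q| = 2^{-jn}` of a dyadic cube, as an element of `ℝ≥0∞`. -/
noncomputable def vol {n : ℕ} (Q : DyadicCube n) : ℝ≥0∞ :=
  (2 : ℝ≥0∞) ^ (-(Q.j : ℝ) * n)

/-- The characteristic function `χ_Q`, with values in `ℝ≥0∞`. -/
noncomputable def ind {n : ℕ} (Q : DyadicCube n) (x : Fin n → ℝ) : ℝ≥0∞ :=
  Q.toSet.indicator (fun _ => (1 : ℝ≥0∞)) x

end DyadicCube

open DyadicCube

/-- The coefficient `|Q|^{-s/n - 1/2}`. -/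
noncomputable def coeff {n : ℕ} (s : ℝ) (Q : DyadicCube n) : ℝ≥0∞ :=
  Q.vol ^ (-(s / (n : ℝ)) - 1 / 2)

/-- The `ℓ^q`-norm `(Σ_i a_i^q)^{1/q}` of a family of extended nonnegative reals,
with the usual modification (`sup`) when `q = ∞`. -/
noncomputable def lqSum {ι : Type*} (q : ℝ≥0∞) (a : ι → ℝ≥0∞) : ℝ≥0∞ :=
  if q = ∞ then ⨆ i, a i else (∑' i, a i ^ q.toReal) ^ (1 / q.toReal)

/-- The `L^p`-norm `(∫_A g^p dx)^{1/p}` over a set `A ⊆ ℝⁿ`, with the usual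
modification (`sup` over `x ∈ A`) when `p = ∞`. -/
noncomputable def lpIntOn {n : ℕ} (p : ℝ≥0∞) (A : Set (Fin n → ℝ))
    (g : (Fin n → ℝ) → ℝ≥0∞) : ℝ≥0∞ :=
  if p = ∞ then ⨆ x ∈ A, g x
  else (∫⁻ x in A, g x ^ p.toReal) ^ (1 / p.toReal)

/-- The Triebel–Lizorkin-type sequence norm
`‖t‖_{ḟ^{s,τ}_{p,q}} = sup_P |P|^{-τ} ( ∫_P ( Σ_{Q ⊆ P} [|Q|^{-s/n-1/2} |t_Q| χ_Q(x)]^q )^{p/q} dx )^{1/p}`,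
with the usual modifications when `p = ∞` or `q = ∞`. -/
noncomputable def fNorm (n : ℕ) (s τ : ℝ) (p q : ℝ≥0∞) (t : DyadicCube n → ℂ) : ℝ≥0∞ :=
  ⨆ P : DyadicCube n, P.vol ^ (-τ) *
    lpIntOn p P.toSet fun x =>
      lqSum q fun Q : {Q : DyadicCube n // Q.toSet ⊆ P.toSet} =>
        coeff s Q.1 * ‖t Q.1‖₊ * ind Q.1 x

/-- The Besov-type sequence norm
`‖t‖_{ḃ^{s,τ}_{p,q}} = sup_P |P|^{-τ} ( Σ_{j ≥ j_P} ( ∫_P [ Σ_{Q ⊆ P, ℓ(Q)=2^{-j}} |Q|^{-s/n-1/2} |t_Q| χ_Q(x) ]^p dx )^{q/p} )^{1/q}`,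
with the usual modifications when `p = ∞` or `q = ∞`. -/
noncomputable def bNorm (n : ℕ) (s τ : ℝ) (p q : ℝ≥0∞) (t : DyadicCube n → ℂ) : ℝ≥0∞ :=
  ⨆ P : DyadicCube n, P.vol ^ (-τ) *
    lqSum q fun j : {j : ℤ // P.j ≤ j} =>
      lpIntOn p P.toSet fun x =>
        ∑' Q : {Q : DyadicCube n // Q.toSet ⊆ P.toSet ∧ Q.j = j.1},
          coeff s Q.1 * ‖t Q.1‖₊ * ind Q.1 x

/-- The `ḟ^{σ}_{∞,∞} = ḃ^{σ}_{∞,∞}` sequence norm `sup_Q |Q|^{-σ/n - 1/2} |t_Q|`. -/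
noncomputable def supNorm (n : ℕ) (σ : ℝ) (t : DyadicCube n → ℂ) : ℝ≥0∞ :=
  ⨆ Q : DyadicCube n, coeff σ Q * ‖t Q‖₊

/-- The test sequence with `t_{R_j} = |R_j|^{s/n + 1/2 + τ - 1/p}` for
`R_j = [0,2^{-j})^n` (the dyadic cube with `k = 0`), and `t_Q = 0` otherwise. -/
noncomputable def testSeq (n : ℕ) (s τ p : ℝ) : DyadicCube n → ℂ := fun Q =>
  if Q.k = 0 then
    ((((2 : ℝ) ^ (-(Q.j : ℝ) * n)) ^ (s / n + 1 / 2 + τ - 1 / p) : ℝ) : ℂ)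
  else 0

/-- The cube `R_j = [0, 2^{-j})^n`. -/
def Rcube (n : ℕ) (j : ℤ) : DyadicCube n := ⟨j, 0⟩

lemma vol_ne_zero {n : ℕ} (Q : DyadicCube n) : Q.vol ≠ 0 := by
  simp [vol, ENNReal.rpow_eq_zero_iff]

lemma vol_ne_top {n : ℕ} (Q : DyadicCube n) : Q.vol ≠ ∞ := by
  simp [vol, ENNReal.rpow_eq_top_iff]

lemma vol_rpow_add {n : ℕ} (Q : DyadicCube n) (a b : ℝ) :
    Q.vol ^ (a + b) = Q.vol ^ a * Q.vol ^ b :=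
  ENNReal.rpow_add _ _ (vol_ne_zero Q) (vol_ne_top Q)

lemma toSet_eq {n : ℕ} (Q : DyadicCube n) :
    Q.toSet = Set.univ.pi fun i =>
      Set.Ico ((Q.k i : ℝ) * (2 : ℝ) ^ (-Q.j)) (((Q.k i : ℝ) + 1) * (2 : ℝ) ^ (-Q.j)) := by
  ext x; simp [toSet, Set.mem_pi, Set.mem_Ico]

lemma volume_toSet {n : ℕ} (Q : DyadicCube n) : volume Q.toSet = Q.vol := by
  rw [toSet_eq, volume_pi_pi]
  have h2 : (0:ℝ) < (2:ℝ) ^ (-Q.j) := zpow_pos (by norm_num) _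
  have : ∀ i : Fin n, volume (Set.Ico ((Q.k i : ℝ) * (2 : ℝ) ^ (-Q.j))
      (((Q.k i : ℝ) + 1) * (2 : ℝ) ^ (-Q.j))) = ENNReal.ofReal ((2:ℝ) ^ (-Q.j)) := by
    intro i; rw [Real.volume_Ico]; ring_nf
  rw [Finset.prod_congr rfl fun i _ => this i, Finset.prod_const]
  simp only [Finset.card_univ, Fintype.card_fin, vol]
  rw [← ENNReal.ofReal_pow h2.le]
  rw [show ((2:ℝ)^(-Q.j))^n = (2:ℝ)^(-(Q.j:ℝ)*n) by
    rw [← Real.rpow_intCast 2 (-Q.j), ← Real.rpow_natCast _ n, ← Real.rpow_mul (by norm_num)]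
    push_cast; ring_nf]
  rw [← ENNReal.ofReal_rpow_of_pos (by norm_num)]
  norm_num

lemma corner_mem {n : ℕ} (Q : DyadicCube n) :
    (fun i => (Q.k i : ℝ) * (2 : ℝ) ^ (-Q.j)) ∈ Q.toSet := by
  intro i
  have h2 : (0:ℝ) < (2:ℝ) ^ (-Q.j) := zpow_pos (by norm_num) _
  refine ⟨le_refl _, ?_⟩
  calc (Q.k i : ℝ) * (2 : ℝ) ^ (-Q.j) < (Q.k i : ℝ) * (2 : ℝ) ^ (-Q.j) + (2:ℝ)^(-Q.j) := by
        linarith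
    _ = ((Q.k i : ℝ) + 1) * (2 : ℝ) ^ (-Q.j) := by ring

lemma level_le {n : ℕ} (hn : 0 < n) {Q P : DyadicCube n}
    (h : Q.toSet ⊆ P.toSet) : P.j ≤ Q.j := by
  by_contra hlt
  push_neg at hlt
  set i0 : Fin n := ⟨0, hn⟩
  have hL : (2:ℝ) ^ (-P.j) < (2:ℝ) ^ (-Q.j) := by
    apply zpow_lt_zpow_right₀ (by norm_num) (by omega)
  have h2P : (0:ℝ) < (2:ℝ) ^ (-P.j) := zpow_pos (by norm_num) _
  have h2Q : (0:ℝ) < (2:ℝ) ^ (-Q.j) := zpow_pos (by norm_num) _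
  have hc := h (corner_mem Q)
  set y : Fin n → ℝ := fun i =>
    if i = i0 then (Q.k i0 : ℝ) * (2 : ℝ) ^ (-Q.j) + (2:ℝ)^(-P.j)
    else (Q.k i : ℝ) * (2 : ℝ) ^ (-Q.j)
  have hy : y ∈ Q.toSet := by
    intro i
    by_cases hi : i = i0
    · subst hi
      simp only [y, if_pos rfl]
      constructor
      · linarith
      · calc (Q.k i0 : ℝ) * (2 : ℝ) ^ (-Q.j) + (2:ℝ)^(-P.j)
            < (Q.k i0 : ℝ) * (2 : ℝ) ^ (-Q.j) + (2:ℝ)^(-Q.j) := by linarith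
          _ = ((Q.k i0 : ℝ) + 1) * (2 : ℝ) ^ (-Q.j) := by ring
    · simpa [y, hi] using (corner_mem Q) i
  have h1 := (hc i0).1
  have h2 := (h hy i0).2
  simp only [y, if_pos rfl] at h2
  simp only at h1 h2
  nlinarith [h1, h2]

lemma eq_of_mem {n : ℕ} {Q Q' : DyadicCube n} {x : Fin n → ℝ}
    (hx : x ∈ Q.toSet) (hx' : x ∈ Q'.toSet) (hj : Q.j = Q'.j) : Q = Q' := by
  obtain ⟨j, k⟩ := Q
  obtain ⟨j', k'⟩ := Q'
  simp only at hj
  subst hj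
  simp only [mk.injEq, true_and]
  funext i
  have h1 := hx i
  have h2 := hx' i
  simp only [toSet, Set.mem_setOf_eq] at h1 h2
  have h2j : (0:ℝ) < (2:ℝ) ^ (-j) := zpow_pos (by norm_num) _
  have e1 : k i = ⌊x i * (2:ℝ)^j⌋ := by
    symm; rw [Int.floor_eq_iff]
    constructor
    · calc (k i : ℝ) = (k i : ℝ) * (2:ℝ)^(-j) * (2:ℝ)^(j) := by
            rw [mul_assoc, ← zpow_add₀ (by norm_num : (2:ℝ) ≠ 0)]; simp
        _ ≤ x i * (2:ℝ)^j := by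
            apply mul_le_mul_of_nonneg_right h1.1 (zpow_pos (by norm_num : (0:ℝ)<2) _).le
    · calc x i * (2:ℝ)^j < ((k i:ℝ)+1) * (2:ℝ)^(-j) * (2:ℝ)^j := by
            apply mul_lt_mul_of_pos_right h1.2 (zpow_pos (by norm_num : (0:ℝ)<2) _)
        _ = (k i : ℝ) + 1 := by
            rw [mul_assoc, ← zpow_add₀ (by norm_num : (2:ℝ) ≠ 0)]; simp
  have e2 : k' i = ⌊x i * (2:ℝ)^j⌋ := by
    symm; rw [Int.floor_eq_iff]
    constructor
    · calc (k' i : ℝ) = (k' i : ℝ) * (2:ℝ)^(-j) * (2:ℝ)^(j) := by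
            rw [mul_assoc, ← zpow_add₀ (by norm_num : (2:ℝ) ≠ 0)]; simp
        _ ≤ x i * (2:ℝ)^j := by
            apply mul_le_mul_of_nonneg_right h2.1 (zpow_pos (by norm_num : (0:ℝ)<2) _).le
    · calc x i * (2:ℝ)^j < ((k' i:ℝ)+1) * (2:ℝ)^(-j) * (2:ℝ)^j := by
            apply mul_lt_mul_of_pos_right h2.2 (zpow_pos (by norm_num : (0:ℝ)<2) _)
        _ = (k' i : ℝ) + 1 := by
            rw [mul_assoc, ← zpow_add₀ (by norm_num : (2:ℝ) ≠ 0)]; simp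
  rw [e1, e2]

/-- tsum of a function with at most one nonzero value is bounded by any pointwise bound. -/
lemma tsum_le_of_subsingleton_support {ι : Type*} (F : ι → ℝ≥0∞) (B : ℝ≥0∞)
    (hss : ∀ i i', F i ≠ 0 → F i' ≠ 0 → i = i') (hle : ∀ i, F i ≤ B) :
    ∑' i, F i ≤ B := by
  by_cases hex : ∃ i₀, F i₀ ≠ 0
  · obtain ⟨i₀, hi₀⟩ := hex
    rw [tsum_eq_single i₀ (fun j hj => by
      by_contra hFj
      exact hj (hss j i₀ hFj hi₀))]
    exact hle i₀
  · push_neg at hex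
    simp only [hex]
    simp

lemma tsum_le_fiberwise {ι κ : Type*} (F : ι → ℝ≥0∞) (g : κ → ℝ≥0∞) (h : ι → κ)
    (hinj : ∀ i i', F i ≠ 0 → F i' ≠ 0 → h i = h i' → i = i')
    (hle : ∀ i, F i ≤ g (h i)) : ∑' i, F i ≤ ∑' k, g k := by
  rw [← (Equiv.sigmaFiberEquiv h).tsum_eq F]
  rw [ENNReal.tsum_sigma']
  apply ENNReal.tsum_le_tsum
  intro k
  apply tsum_le_of_subsingleton_support _ (g k)
  · rintro ⟨i, hi⟩ ⟨i', hi'⟩ h1 h2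
    simp only [Equiv.sigmaFiberEquiv, ne_eq] at h1 h2
    have := hinj i i' h1 h2 (hi.trans hi'.symm)
    subst this
    rfl
  · rintro ⟨i, hi⟩
    simp only [Equiv.sigmaFiberEquiv]
    subst hi
    exact hle i

def intGeoEquiv (j₀ : ℤ) : ℕ ≃ {j : ℤ // j₀ ≤ j} where
  toFun := fun m => ⟨j₀ + m, le_add_of_nonneg_right (by positivity)⟩
  invFun := fun j => (j.1 - j₀).toNat
  left_inv := fun m => by simp
  right_inv := fun j => by ext; simp only; omega

/-- Geometric-type sum over `{j : ℤ // j₀ ≤ j}`. -/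
lemma tsum_int_geo (j₀ : ℤ) (a : ℝ) :
    ∑' j : {j : ℤ // j₀ ≤ j}, (2:ℝ≥0∞) ^ (-(j.1:ℝ) * a)
      = (2:ℝ≥0∞) ^ (-(j₀:ℝ) * a) * (1 - (2:ℝ≥0∞) ^ (-a))⁻¹ := by
  set e := intGeoEquiv j₀ with he
  rw [← e.tsum_eq]
  have : ∀ m : ℕ, (2:ℝ≥0∞) ^ (-((e m).1:ℝ) * a)
      = (2:ℝ≥0∞) ^ (-(j₀:ℝ) * a) * ((2:ℝ≥0∞) ^ (-a)) ^ m := by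
    intro m
    have : ((2:ℝ≥0∞) ^ (-a)) ^ m = (2:ℝ≥0∞) ^ (-a * m) := by
      rw [← ENNReal.rpow_natCast ((2:ℝ≥0∞) ^ (-a)) m, ← ENNReal.rpow_mul]
    rw [this, ← ENNReal.rpow_add _ _ (by norm_num) (by norm_num)]
    congr 1
    have : ((e m).1 : ℝ) = (j₀:ℝ) + m := by
      have : (e m).1 = j₀ + m := rfl
      rw [this]; push_cast; ring
    rw [this]
    ring
  simp only [this]
  rw [ENNReal.tsum_mul_left, ENNReal.tsum_geometric]

lemma two_rpow_ne_top (a : ℝ) : (2:ℝ≥0∞) ^ a ≠ ∞ := by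
  simp [ENNReal.rpow_eq_top_iff]

lemma two_rpow_ne_zero (a : ℝ) : (2:ℝ≥0∞) ^ a ≠ 0 := by
  simp [ENNReal.rpow_eq_zero_iff]

lemma two_rpow_lt_one {a : ℝ} (ha : 0 < a) : (2:ℝ≥0∞) ^ (-a) < 1 := by
  have := ENNReal.rpow_lt_rpow_of_exponent_lt (x := 2) (y := -a) (z := 0)
    (by norm_num) (by norm_num) (by linarith)
  simpa using this

lemma rpow_rpow_inv {q : ℝ} (hq : 0 < q) (x : ℝ≥0∞) : (x ^ q) ^ (1/q) = x := by
  rw [← ENNReal.rpow_mul, mul_one_div, div_self hq.ne', ENNReal.rpow_one]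

lemma lqSum_ofReal {ι : Type*} {q : ℝ} (hq : 0 < q) (a : ι → ℝ≥0∞) :
    lqSum (ENNReal.ofReal q) a = (∑' i, a i ^ q) ^ (1/q) := by
  rw [lqSum, if_neg ENNReal.ofReal_ne_top, ENNReal.toReal_ofReal hq.le]

lemma lpIntOn_ofReal {n : ℕ} {p : ℝ} (hp : 0 < p) (A : Set (Fin n → ℝ))
    (g : (Fin n → ℝ) → ℝ≥0∞) :
    lpIntOn (ENNReal.ofReal p) A g = (∫⁻ x in A, g x ^ p) ^ (1/p) := by
  rw [lpIntOn, if_neg ENNReal.ofReal_ne_top, ENNReal.toReal_ofReal hp.le]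

lemma lpIntOn_le_const {n : ℕ} {p : ℝ} (hp : 0 < p) (A : Set (Fin n → ℝ))
    (g : (Fin n → ℝ) → ℝ≥0∞) (B : ℝ≥0∞) (hg : ∀ x, g x ≤ B) :
    lpIntOn (ENNReal.ofReal p) A g ≤ B * (volume A) ^ (1/p) := by
  rw [lpIntOn_ofReal hp]
  have h1 : (∫⁻ x in A, g x ^ p) ≤ B ^ p * volume A := by
    rw [← setLIntegral_const A (B ^ p)]
    exact lintegral_mono fun x => ENNReal.rpow_le_rpow (hg x) hp.le
  calc (∫⁻ x in A, g x ^ p) ^ (1/p) ≤ (B ^ p * volume A) ^ (1/p) :=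
        ENNReal.rpow_le_rpow h1 (by positivity)
    _ = B * (volume A) ^ (1/p) := by
        rw [ENNReal.mul_rpow_of_nonneg _ _ (by positivity), rpow_rpow_inv hp]

lemma const_le_lpIntOn {n : ℕ} {p : ℝ} (hp : 0 < p) (A : Set (Fin n → ℝ))
    (hA : MeasurableSet A)
    (g : (Fin n → ℝ) → ℝ≥0∞) (B : ℝ≥0∞) (hg : ∀ x ∈ A, B ≤ g x) :
    B * (volume A) ^ (1/p) ≤ lpIntOn (ENNReal.ofReal p) A g := by
  rw [lpIntOn_ofReal hp]
  have h1 : B ^ p * volume A ≤ (∫⁻ x in A, g x ^ p) := by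
    rw [← setLIntegral_const A (B ^ p)]
    refine lintegral_mono_ae ?_
    rw [ae_restrict_iff' hA]
    exact Filter.Eventually.of_forall fun x hx => ENNReal.rpow_le_rpow (hg x hx) hp.le
  calc B * (volume A) ^ (1/p) = (B ^ p * volume A) ^ (1/p) := by
        rw [ENNReal.mul_rpow_of_nonneg _ _ (by positivity), rpow_rpow_inv hp]
    _ ≤ (∫⁻ x in A, g x ^ p) ^ (1/p) := ENNReal.rpow_le_rpow h1 (by positivity)

lemma le_lqSum {ι : Type*} {q : ℝ} (hq : 0 < q) (a : ι → ℝ≥0∞) (i₀ : ι) :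
    a i₀ ≤ lqSum (ENNReal.ofReal q) a := by
  rw [lqSum_ofReal hq]
  calc a i₀ = (a i₀ ^ q) ^ (1/q) := (rpow_rpow_inv hq _).symm
    _ ≤ (∑' i, a i ^ q) ^ (1/q) :=
        ENNReal.rpow_le_rpow (ENNReal.le_tsum i₀) (by positivity)

lemma lqSum_mono {ι : Type*} {q : ℝ} (hq : 0 < q) {a b : ι → ℝ≥0∞}
    (hab : ∀ i, a i ≤ b i) :
    lqSum (ENNReal.ofReal q) a ≤ lqSum (ENNReal.ofReal q) b := by
  rw [lqSum_ofReal hq, lqSum_ofReal hq]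
  exact ENNReal.rpow_le_rpow
    (ENNReal.tsum_le_tsum fun i => ENNReal.rpow_le_rpow (hab i) hq.le) (by positivity)

/-- The value of `lqSum` on the geometric family `j ↦ c * 2^{-j a}`, `j ≥ j₀`. -/
lemma lqSum_geo {q : ℝ} (hq : 0 < q) (j₀ : ℤ) (a : ℝ) (c : ℝ≥0∞) :
    lqSum (ENNReal.ofReal q) (fun j : {j : ℤ // j₀ ≤ j} => c * (2:ℝ≥0∞) ^ (-(j.1:ℝ) * a))
      = c * (2:ℝ≥0∞) ^ (-(j₀:ℝ) * a) * ((1 - (2:ℝ≥0∞) ^ (-(a*q)))⁻¹) ^ (1/q) := by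
  rw [lqSum_ofReal hq]
  have h1 : ∀ j : {j : ℤ // j₀ ≤ j},
      (c * (2:ℝ≥0∞) ^ (-(j.1:ℝ) * a)) ^ q = c ^ q * (2:ℝ≥0∞) ^ (-(j.1:ℝ) * (a*q)) := by
    intro j
    rw [ENNReal.mul_rpow_of_nonneg _ _ hq.le, ← ENNReal.rpow_mul]
    congr 2
    ring
  simp only [h1]
  rw [ENNReal.tsum_mul_left, tsum_int_geo j₀ (a*q), ← mul_assoc,
    ENNReal.mul_rpow_of_nonneg _ _ (by positivity),
    ENNReal.mul_rpow_of_nonneg _ _ (by positivity), rpow_rpow_inv hq]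
  congr 2
  rw [← ENNReal.rpow_mul]
  congr 1
  field_simp

lemma measurableSet_toSet {n : ℕ} (Q : DyadicCube n) : MeasurableSet Q.toSet := by
  rw [toSet_eq]; exact MeasurableSet.univ_pi fun i => measurableSet_Ico

lemma vol_rpow {n : ℕ} (Q : DyadicCube n) (b : ℝ) :
    Q.vol ^ b = (2:ℝ≥0∞) ^ (-(Q.j:ℝ) * ((n:ℝ) * b)) := by
  rw [vol, ← ENNReal.rpow_mul]; congr 1; ring

lemma coeff_shift {n : ℕ} (hn : 0 < n) (s τ p : ℝ) (Q : DyadicCube n) :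
    coeff (s + n*(τ - 1/p)) Q = Q.vol ^ (-τ) * coeff s Q * Q.vol ^ (1/p) := by
  unfold coeff
  rw [← vol_rpow_add, ← vol_rpow_add]
  congr 1
  have hn' : (n:ℝ) ≠ 0 := Nat.cast_ne_zero.mpr hn.ne'
  field_simp
  ring

lemma coeff_factor {n : ℕ} (hn : 0 < n) (s τ p : ℝ) (Q : DyadicCube n) :
    coeff s Q = coeff (s + n*(τ - 1/p)) Q * Q.vol ^ (τ - 1/p) := by
  unfold coeff
  rw [← vol_rpow_add]
  congr 1
  have hn' : (n:ℝ) ≠ 0 := Nat.cast_ne_zero.mpr hn.ne'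
  field_simp
  ring

lemma ind_le_one {n : ℕ} (Q : DyadicCube n) (x : Fin n → ℝ) : Q.ind x ≤ 1 := by
  unfold ind
  by_cases hx : x ∈ Q.toSet <;> simp [hx]

lemma mem_of_ind_ne_zero {n : ℕ} {Q : DyadicCube n} {x : Fin n → ℝ}
    (h : Q.ind x ≠ 0) : x ∈ Q.toSet := by
  by_contra hx
  exact h (Set.indicator_of_notMem hx _)

section Main

variable {n : ℕ} {s p q τ : ℝ}

lemma sup_le_fNorm (hn : 0 < n) (hp : 0 < p) (hq : 0 < q) (t : DyadicCube n → ℂ) :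
    supNorm n (s + n*(τ - 1/p)) t ≤ fNorm n s τ (ENNReal.ofReal p) (ENNReal.ofReal q) t := by
  apply iSup_le; intro Q
  refine le_iSup_of_le Q ?_
  set B : ℝ≥0∞ := coeff s Q * ‖t Q‖₊ with hB
  have key : ∀ x ∈ Q.toSet, B ≤ lqSum (ENNReal.ofReal q)
      (fun Q' : {Q' : DyadicCube n // Q'.toSet ⊆ Q.toSet} =>
        coeff s Q'.1 * ‖t Q'.1‖₊ * ind Q'.1 x) := by
    intro x hx
    have h := le_lqSum hq (fun Q' : {Q' : DyadicCube n // Q'.toSet ⊆ Q.toSet} =>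
      coeff s Q'.1 * ‖t Q'.1‖₊ * ind Q'.1 x) ⟨Q, subset_rfl⟩
    simpa [ind, Set.indicator_of_mem hx, hB] using h
  have h2 := const_le_lpIntOn hp Q.toSet (measurableSet_toSet Q) _ B key
  rw [volume_toSet] at h2
  calc coeff (s + n*(τ - 1/p)) Q * ‖t Q‖₊
      = Q.vol ^ (-τ) * (B * Q.vol ^ (1/p)) := by rw [coeff_shift hn, hB]; ring
    _ ≤ _ := mul_le_mul_right h2 _

lemma sup_le_bNorm (hn : 0 < n) (hp : 0 < p) (hq : 0 < q) (t : DyadicCube n → ℂ) :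
    supNorm n (s + n*(τ - 1/p)) t ≤ bNorm n s τ (ENNReal.ofReal p) (ENNReal.ofReal q) t := by
  apply iSup_le; intro Q
  refine le_iSup_of_le Q ?_
  set B : ℝ≥0∞ := coeff s Q * ‖t Q‖₊ with hB
  have key : ∀ x ∈ Q.toSet, B ≤
      ∑' Q' : {Q' : DyadicCube n // Q'.toSet ⊆ Q.toSet ∧ Q'.j = (⟨Q.j, le_refl _⟩ : {j : ℤ // Q.j ≤ j}).1},
        coeff s Q'.1 * ‖t Q'.1‖₊ * ind Q'.1 x := by
    intro x hx
    have h := ENNReal.le_tsum (f := fun Q' : {Q' : DyadicCube n // Q'.toSet ⊆ Q.toSet ∧ Q'.j = Q.j} =>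
      coeff s Q'.1 * ‖t Q'.1‖₊ * ind Q'.1 x) ⟨Q, ⟨subset_rfl, rfl⟩⟩
    simpa [ind, Set.indicator_of_mem hx, hB] using h
  have h2 := const_le_lpIntOn hp Q.toSet (measurableSet_toSet Q) _ B key
  rw [volume_toSet] at h2
  have h3 := le_lqSum hq (fun j : {j : ℤ // Q.j ≤ j} =>
      lpIntOn (ENNReal.ofReal p) Q.toSet fun x =>
        ∑' Q' : {Q' : DyadicCube n // Q'.toSet ⊆ Q.toSet ∧ Q'.j = j.1},
          coeff s Q'.1 * ‖t Q'.1‖₊ * ind Q'.1 x) ⟨Q.j, le_refl _⟩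
  calc coeff (s + n*(τ - 1/p)) Q * ‖t Q‖₊
      = Q.vol ^ (-τ) * (B * Q.vol ^ (1/p)) := by rw [coeff_shift hn, hB]; ring
    _ ≤ Q.vol ^ (-τ) * _ := mul_le_mul_right (h2.trans h3) _

end Main

section Upper

variable {n : ℕ} {s p q τ : ℝ}

/-- The comparison constant. -/
noncomputable def Kconst (n : ℕ) (p q τ : ℝ) : ℝ≥0∞ :=
  ((1 - (2:ℝ≥0∞) ^ (-((n:ℝ)*(τ - 1/p)*q)))⁻¹) ^ (1/q)

lemma aq_pos (hn : 0 < n) (hp : 0 < p) (hq : 0 < q) (hτ : 1/p < τ) :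
    0 < (n:ℝ)*(τ - 1/p)*q := by
  have : (0:ℝ) < n := Nat.cast_pos.mpr hn
  have : 0 < τ - 1/p := by linarith
  positivity

lemma Kconst_ne_top (hn : 0 < n) (hp : 0 < p) (hq : 0 < q) (hτ : 1/p < τ) :
    Kconst n p q τ ≠ ∞ := by
  have hlt := two_rpow_lt_one (aq_pos hn hp hq hτ)
  have h1 : (1 - (2:ℝ≥0∞) ^ (-((n:ℝ)*(τ - 1/p)*q))) ≠ 0 := by
    simp only [ne_eq, tsub_eq_zero_iff_le, not_le]
    exact hlt
  rw [Kconst]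
  exact ENNReal.rpow_ne_top_of_nonneg (by positivity)
    (by rw [ne_eq, ENNReal.inv_eq_top]; exact h1)

lemma Kconst_ne_zero (hn : 0 < n) (hp : 0 < p) (hq : 0 < q) (hτ : 1/p < τ) :
    Kconst n p q τ ≠ 0 := by
  have h2 : (1 - (2:ℝ≥0∞) ^ (-((n:ℝ)*(τ - 1/p)*q)))⁻¹ ≠ ∞ := by
    simp only [ne_eq, ENNReal.inv_eq_top]
    simp only [ne_eq, tsub_eq_zero_iff_le, not_le]
    exact two_rpow_lt_one (aq_pos hn hp hq hτ)
  have hbne : (1 - (2:ℝ≥0∞) ^ (-((n:ℝ)*(τ - 1/p)*q))) ≠ ⊤ :=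
    (tsub_le_self.trans_lt ENNReal.one_lt_top).ne
  rw [Kconst]
  intro h
  rcases ENNReal.rpow_eq_zero_iff.mp h with ⟨h0, _⟩ | ⟨_, hlt⟩
  · exact (ENNReal.inv_ne_zero.mpr hbne) h0
  · linarith [one_div_pos.mpr hq]

lemma one_le_Kconst (hq : 0 < q) : 1 ≤ Kconst n p q τ := by
  rw [Kconst]
  have h1 : (1:ℝ≥0∞) ≤ (1 - (2:ℝ≥0∞) ^ (-((n:ℝ)*(τ - 1/p)*q)))⁻¹ := by
    rw [ENNReal.one_le_inv]
    exact tsub_le_self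
  calc (1:ℝ≥0∞) = 1 ^ (1/q) := (ENNReal.one_rpow _).symm
    _ ≤ _ := ENNReal.rpow_le_rpow h1 (by positivity)

lemma fNorm_le (hn : 0 < n) (hp : 0 < p) (hq : 0 < q) (hτ : 1/p < τ)
    (t : DyadicCube n → ℂ) :
    fNorm n s τ (ENNReal.ofReal p) (ENNReal.ofReal q) t ≤
      Kconst n p q τ * supNorm n (s + n*(τ - 1/p)) t := by
  set a : ℝ := (n:ℝ)*(τ - 1/p) with ha
  set M := supNorm n (s + n*(τ - 1/p)) t with hM
  apply iSup_le; intro P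
  have hterm : ∀ Q : DyadicCube n, coeff s Q * ‖t Q‖₊ ≤ M * Q.vol ^ (τ - 1/p) := by
    intro Q
    have h1 : coeff (s + n*(τ - 1/p)) Q * ‖t Q‖₊ ≤ M := by
      rw [hM]
      exact le_iSup (fun Q => coeff (s + n*(τ - 1/p)) Q * (‖t Q‖₊ : ℝ≥0∞)) Q
    calc coeff s Q * ‖t Q‖₊ = (coeff (s + n*(τ - 1/p)) Q * ‖t Q‖₊) * Q.vol ^ (τ - 1/p) := by
          rw [coeff_factor hn s τ p]; ring
      _ ≤ M * Q.vol ^ (τ - 1/p) := mul_le_mul_left h1 _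
  -- pointwise bound on the lqSum
  have hpt : ∀ x : Fin n → ℝ, (lqSum (ENNReal.ofReal q)
      (fun Q : {Q : DyadicCube n // Q.toSet ⊆ P.toSet} =>
        coeff s Q.1 * ‖t Q.1‖₊ * ind Q.1 x)) ≤
      M * (2:ℝ≥0∞) ^ (-(P.j:ℝ) * a) * Kconst n p q τ := by
    intro x
    have hsum : (∑' Q : {Q : DyadicCube n // Q.toSet ⊆ P.toSet},
        (coeff s Q.1 * ‖t Q.1‖₊ * ind Q.1 x) ^ q) ≤
        ∑' j : {j : ℤ // P.j ≤ j}, (M * (2:ℝ≥0∞) ^ (-(j.1:ℝ) * a)) ^ q := by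
      apply tsum_le_fiberwise _ _ (fun Q => (⟨Q.1.j, level_le hn Q.2⟩ : {j : ℤ // P.j ≤ j}))
      · rintro ⟨Q, hQ⟩ ⟨Q', hQ'⟩ h1 h2 hjj
        have hx1 : x ∈ Q.toSet := by
          refine mem_of_ind_ne_zero fun h0 => h1 ?_
          simp [h0, ENNReal.zero_rpow_of_pos hq]
        have hx2 : x ∈ Q'.toSet := by
          refine mem_of_ind_ne_zero fun h0 => h2 ?_
          simp [h0, ENNReal.zero_rpow_of_pos hq]
        have hj : Q.j = Q'.j := by simpa using congrArg Subtype.val hjj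
        exact Subtype.ext (eq_of_mem hx1 hx2 hj)
      · rintro ⟨Q, hQ⟩
        apply ENNReal.rpow_le_rpow _ hq.le
        calc coeff s Q * ‖t Q‖₊ * ind Q x ≤ (M * Q.vol ^ (τ - 1/p)) * 1 :=
              mul_le_mul' (hterm Q) (ind_le_one Q x)
          _ = M * (2:ℝ≥0∞) ^ (-(Q.j:ℝ) * a) := by rw [mul_one, vol_rpow]
    rw [lqSum_ofReal hq]
    calc (∑' Q : {Q : DyadicCube n // Q.toSet ⊆ P.toSet},
          (coeff s Q.1 * ‖t Q.1‖₊ * ind Q.1 x) ^ q) ^ (1/q)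
        ≤ (∑' j : {j : ℤ // P.j ≤ j}, (M * (2:ℝ≥0∞) ^ (-(j.1:ℝ) * a)) ^ q) ^ (1/q) :=
          ENNReal.rpow_le_rpow hsum (by positivity)
      _ = M * (2:ℝ≥0∞) ^ (-(P.j:ℝ) * a) * Kconst n p q τ := by
          rw [← lqSum_ofReal hq, lqSum_geo hq P.j a M, Kconst]
  have hint := lpIntOn_le_const hp P.toSet _ _ hpt
  rw [volume_toSet] at hint
  calc P.vol ^ (-τ) * lpIntOn (ENNReal.ofReal p) P.toSet _
      ≤ P.vol ^ (-τ) * (M * (2:ℝ≥0∞) ^ (-(P.j:ℝ) * a) * Kconst n p q τ * P.vol ^ (1/p)) :=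
        mul_le_mul_right hint _
    _ = M * Kconst n p q τ * (P.vol ^ (-τ) * (P.vol ^ (τ - 1/p) * P.vol ^ (1/p))) := by
        rw [← vol_rpow]; ring
    _ = Kconst n p q τ * M := by
        rw [← vol_rpow_add, ← vol_rpow_add,
          show -τ + (τ - 1/p + 1/p) = 0 by ring, ENNReal.rpow_zero, mul_one, mul_comm]

lemma bNorm_le (hn : 0 < n) (hp : 0 < p) (hq : 0 < q) (hτ : 1/p < τ)
    (t : DyadicCube n → ℂ) :
    bNorm n s τ (ENNReal.ofReal p) (ENNReal.ofReal q) t ≤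
      Kconst n p q τ * supNorm n (s + n*(τ - 1/p)) t := by
  set a : ℝ := (n:ℝ)*(τ - 1/p) with ha
  set M := supNorm n (s + n*(τ - 1/p)) t with hM
  apply iSup_le; intro P
  have hterm : ∀ Q : DyadicCube n, coeff s Q * ‖t Q‖₊ ≤ M * Q.vol ^ (τ - 1/p) := by
    intro Q
    have h1 : coeff (s + n*(τ - 1/p)) Q * ‖t Q‖₊ ≤ M := by
      rw [hM]
      exact le_iSup (fun Q => coeff (s + n*(τ - 1/p)) Q * (‖t Q‖₊ : ℝ≥0∞)) Q
    calc coeff s Q * ‖t Q‖₊ = (coeff (s + n*(τ - 1/p)) Q * ‖t Q‖₊) * Q.vol ^ (τ - 1/p) := by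
          rw [coeff_factor hn s τ p]; ring
      _ ≤ M * Q.vol ^ (τ - 1/p) := mul_le_mul_left h1 _
  have hj : ∀ j : {j : ℤ // P.j ≤ j},
      (lpIntOn (ENNReal.ofReal p) P.toSet fun x =>
        ∑' Q : {Q : DyadicCube n // Q.toSet ⊆ P.toSet ∧ Q.j = j.1},
          coeff s Q.1 * ‖t Q.1‖₊ * ind Q.1 x) ≤
      (M * (volume P.toSet) ^ (1/p)) * (2:ℝ≥0∞) ^ (-(j.1:ℝ) * a) := by
    intro j
    have hpt : ∀ x : Fin n → ℝ,
        (∑' Q : {Q : DyadicCube n // Q.toSet ⊆ P.toSet ∧ Q.j = j.1},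
          coeff s Q.1 * ‖t Q.1‖₊ * ind Q.1 x) ≤ M * (2:ℝ≥0∞) ^ (-(j.1:ℝ) * a) := by
      intro x
      apply tsum_le_of_subsingleton_support
      · rintro ⟨Q, hQ⟩ ⟨Q', hQ'⟩ h1 h2
        have hx1 : x ∈ Q.toSet := by
          refine mem_of_ind_ne_zero fun h0 => h1 ?_
          simp [h0]
        have hx2 : x ∈ Q'.toSet := by
          refine mem_of_ind_ne_zero fun h0 => h2 ?_
          simp [h0]
        exact Subtype.ext (eq_of_mem hx1 hx2 (hQ.2.trans hQ'.2.symm))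
      · rintro ⟨Q, hQ⟩
        calc coeff s Q * ‖t Q‖₊ * ind Q x ≤ (M * Q.vol ^ (τ - 1/p)) * 1 :=
              mul_le_mul' (hterm Q) (ind_le_one Q x)
          _ = M * (2:ℝ≥0∞) ^ (-(Q.j:ℝ) * a) := by rw [mul_one, vol_rpow]
          _ = M * (2:ℝ≥0∞) ^ (-(j.1:ℝ) * a) := by rw [hQ.2]
    have := lpIntOn_le_const hp P.toSet _ _ hpt
    calc _ ≤ M * (2:ℝ≥0∞) ^ (-(j.1:ℝ) * a) * (volume P.toSet) ^ (1/p) := this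
      _ = (M * (volume P.toSet) ^ (1/p)) * (2:ℝ≥0∞) ^ (-(j.1:ℝ) * a) := by ring
  have hlq := (lqSum_mono hq hj).trans_eq
    (lqSum_geo hq P.j a (M * (volume P.toSet) ^ (1/p)))
  calc P.vol ^ (-τ) * _ ≤ P.vol ^ (-τ) *
        (M * (volume P.toSet) ^ (1/p) * (2:ℝ≥0∞) ^ (-(P.j:ℝ) * a) * Kconst n p q τ) := by
        rw [Kconst]
        exact mul_le_mul_right hlq _
    _ = M * Kconst n p q τ * (P.vol ^ (-τ) * (P.vol ^ (τ - 1/p) * P.vol ^ (1/p))) := by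
        rw [volume_toSet, ← vol_rpow]; ring
    _ = Kconst n p q τ * M := by
        rw [← vol_rpow_add, ← vol_rpow_add,
          show -τ + (τ - 1/p + 1/p) = 0 by ring, ENNReal.rpow_zero, mul_one, mul_comm]

end Upper


/-- for `s ∈ ℝ`, `p, q ∈ (0,∞)` and `τ ∈ (1/p,∞)`, the norms
`‖·‖_{ḟ^{s,τ}_{p,q}}` and `‖·‖_{ḃ^{s,τ}_{p,q}}` are equivalent to each other, both
being equivalent to `‖·‖_{ḃ^{s+n(τ-1/p)}_{∞,∞}} = sup_Q |Q|^{-s/n-(τ-1/p)-1/2}|t_Q|`;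
in particular `ḟ^{s,τ}_{p,q} = ḃ^{s,τ}_{p,q}` with equivalent norms. -/
theorem stmt8 (n : ℕ) (hn : 0 < n) (s p q τ : ℝ)
    (hp : 0 < p) (hq : 0 < q) (hτ : 1 / p < τ) :
    ∃ c C : ℝ≥0∞, 0 < c ∧ C ≠ ∞ ∧ ∀ t : DyadicCube n → ℂ,
      (c * bNorm n s τ (ENNReal.ofReal p) (ENNReal.ofReal q) t ≤
          fNorm n s τ (ENNReal.ofReal p) (ENNReal.ofReal q) t ∧
        fNorm n s τ (ENNReal.ofReal p) (ENNReal.ofReal q) t ≤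
          C * bNorm n s τ (ENNReal.ofReal p) (ENNReal.ofReal q) t) ∧
      (c * supNorm n (s + n * (τ - 1 / p)) t ≤
          fNorm n s τ (ENNReal.ofReal p) (ENNReal.ofReal q) t ∧
        fNorm n s τ (ENNReal.ofReal p) (ENNReal.ofReal q) t ≤
          C * supNorm n (s + n * (τ - 1 / p)) t) ∧
      (c * supNorm n (s + n * (τ - 1 / p)) t ≤
          bNorm n s τ (ENNReal.ofReal p) (ENNReal.ofReal q) t ∧
        bNorm n s τ (ENNReal.ofReal p) (ENNReal.ofReal q) t ≤
          C * supNorm n (s + n * (τ - 1 / p)) t) := by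
  set K := Kconst n p q τ with hK
  have hK0 : K ≠ 0 := Kconst_ne_zero hn hp hq hτ
  have hKtop : K ≠ ∞ := Kconst_ne_top hn hp hq hτ
  have hK1 : 1 ≤ K := one_le_Kconst hq
  refine ⟨K⁻¹, K, ENNReal.inv_pos.mpr hKtop, hKtop, fun t => ?_⟩
  have hSF := sup_le_fNorm hn hp hq (s := s) (τ := τ) t
  have hSB := sup_le_bNorm hn hp hq (s := s) (τ := τ) t
  have hFK := fNorm_le hn hp hq hτ (s := s) t
  have hBK := bNorm_le hn hp hq hτ (s := s) t
  have hKi1 : K⁻¹ ≤ 1 := ENNReal.inv_le_one.mpr hK1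
  have cancel : ∀ X : ℝ≥0∞, K⁻¹ * (K * X) = X := fun X => by
    rw [← mul_assoc, ENNReal.inv_mul_cancel hK0 hKtop, one_mul]
  refine ⟨⟨?_, ?_⟩, ⟨?_, ?_⟩, ⟨?_, ?_⟩⟩
  · calc K⁻¹ * bNorm n s τ (ENNReal.ofReal p) (ENNReal.ofReal q) t
        ≤ K⁻¹ * (K * supNorm n (s + n * (τ - 1 / p)) t) := mul_le_mul_right hBK _
      _ = supNorm n (s + n * (τ - 1 / p)) t := cancel _
      _ ≤ _ := hSF
  · exact hFK.trans (mul_le_mul_right hSB _)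
  · calc K⁻¹ * supNorm n (s + n * (τ - 1 / p)) t
        ≤ 1 * supNorm n (s + n * (τ - 1 / p)) t := mul_le_mul_left hKi1 _
      _ = supNorm n (s + n * (τ - 1 / p)) t := one_mul _
      _ ≤ _ := hSF
  · exact hFK
  · calc K⁻¹ * supNorm n (s + n * (τ - 1 / p)) t
        ≤ 1 * supNorm n (s + n * (τ - 1 / p)) t := mul_le_mul_left hKi1 _
      _ = supNorm n (s + n * (τ - 1 / p)) t := one_mul _
      _ ≤ _ := hSB
  · exact hBK
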